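/- (Chen's identity.) Let Z : [a,c] → ℝ^d be a continuously differentiable path and let a ≤ b ≤ c, so that Z is the concatenation of its restriction x to [a,b] and its restriction y to [b,c]. Then for every n ∈ ℕ, the level-n signature of Z over [a,c] satisfies Sig^n_{a,c}(Z) = Σ_{k=0}^{n} Sig^k_{a,b}(Z) ⊗ Sig^{n−k}_{b,c}(Z), i.e. the full signature of the concatenated path is the tensor-algebra product of the signatures of the two pieces. -/
import Mathlib


open MeasureTheory intervalIntegral

/-- The signature coordinate `Sig^I_{s,t}(X)` of a path `X : ℝ → ℝ^d`, indexed by a word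
`I = (i₁, …, iₙ)` over the alphabet `Fin d`.  It is the iterated integral
`∫_{s < u₁ < ⋯ < uₙ < t} X'_{i₁}(u₁) ⋯ X'_{iₙ}(uₙ) du₁ ⋯ duₙ`, here realized by
integrating over the first variable:
`Sig^{i :: w}_{s,t}(X) = ∫_s^t X'_i(u) · Sig^w_{u,t}(X) du`, with `Sig^∅_{s,t}(X) = 1`. -/
noncomputable def sigCoord {d : ℕ} (X : ℝ → Fin d → ℝ) : ℝ → ℝ → List (Fin d) → ℝ
  | _, _, [] => 1
  | s, t, i :: w => ∫ u in s..t, deriv (fun v => X v i) u * sigCoord X u t w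

lemma deriv_cont {d : ℕ} (Z : ℝ → Fin d → ℝ) (hZ : ContDiff ℝ 1 Z) (i : Fin d) :
    Continuous (deriv (fun v => Z v i)) :=
  (((ContinuousLinearMap.proj i : (Fin d → ℝ) →L[ℝ] ℝ).contDiff).comp hZ).continuous_deriv le_rfl

lemma sig_cont {d : ℕ} (Z : ℝ → Fin d → ℝ) (hZ : ContDiff ℝ 1 Z) :
    ∀ (w : List (Fin d)) (t : ℝ), Continuous fun u => sigCoord Z u t w := by
  intro w
  induction w with
  | nil => intro t; simpa [sigCoord] using continuous_const
  | cons i w ih =>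
    intro t
    have hg : Continuous fun v => deriv (fun v => Z v i) v * sigCoord Z v t w :=
      (deriv_cont Z hZ i).mul (ih t)
    have : Continuous fun u => -∫ v in t..u, deriv (fun v => Z v i) v * sigCoord Z v t w :=
      (intervalIntegral.continuous_primitive (fun a b => hg.intervalIntegrable a b) t).neg
    simpa [sigCoord, intervalIntegral.integral_symm t] using this


/-- **Chen's identity.**  Let `Z : [a,c] → ℝ^d` be a continuously differentiable path and
`a ≤ b ≤ c`, so that `Z` is the concatenation of its restrictions to `[a,b]` and `[b,c]`.
Then for every level `n`, i.e. for every word `w` of length `n`, the signature of `Z` over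
`[a,c]` is the tensor-algebra product of the signatures over `[a,b]` and `[b,c]`.  In
coordinates: `Sig^w_{a,c}(Z) = Σ_{k=0}^{n} Sig^{w₁⋯w_k}_{a,b}(Z) · Sig^{w_{k+1}⋯w_n}_{b,c}(Z)`,
which is exactly the `w`-coordinate of `Σ_{k=0}^{n} Sig^k_{a,b}(Z) ⊗ Sig^{n-k}_{b,c}(Z)`. -/
theorem chen_identity {d : ℕ} (Z : ℝ → Fin d → ℝ) (hZ : ContDiff ℝ 1 Z)
    (a b c : ℝ) (hab : a ≤ b) (hbc : b ≤ c) :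
    ∀ (n : ℕ) (w : List (Fin d)), w.length = n →
      sigCoord Z a c w =
        ∑ k ∈ Finset.range (n + 1),
          sigCoord Z a b (w.take k) * sigCoord Z b c (w.drop k) := by
  suffices h : ∀ (w : List (Fin d)) (a : ℝ), a ≤ b →
      sigCoord Z a c w = ∑ k ∈ Finset.range (w.length + 1),
        sigCoord Z a b (w.take k) * sigCoord Z b c (w.drop k) by
    rintro n w rfl; exact h w a hab
  intro w
  induction w with
  | nil => intro a ha; simp [sigCoord]
  | cons i w ih =>
    intro a ha
    set f : ℝ → ℝ := fun u => deriv (fun v => Z v i) u * sigCoord Z u c w with hf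
    have hfc : Continuous f := (deriv_cont Z hZ i).mul (sig_cont Z hZ w c)
    have hsplit : sigCoord Z a c (i :: w) = (∫ u in a..b, f u) + ∫ u in b..c, f u := by
      rw [show sigCoord Z a c (i :: w) = ∫ u in a..c, f u from rfl]
      exact (intervalIntegral.integral_add_adjacent_intervals
        (hfc.intervalIntegrable a b) (hfc.intervalIntegrable b c)).symm
    have hright : (∫ u in b..c, f u) = sigCoord Z b c (i :: w) := rfl
    have hleft : (∫ u in a..b, f u) =
        ∑ k ∈ Finset.range (w.length + 1),
          sigCoord Z a b (i :: w.take k) * sigCoord Z b c (w.drop k) := by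
      have h1 : (∫ u in a..b, f u) = ∫ u in a..b,
          ∑ k ∈ Finset.range (w.length + 1),
            (deriv (fun v => Z v i) u * sigCoord Z u b (w.take k)) * sigCoord Z b c (w.drop k) := by
        apply intervalIntegral.integral_congr
        intro u hu
        rw [Set.uIcc_of_le ha] at hu
        rw [hf]
        simp only
        rw [ih u hu.2, Finset.mul_sum]
        simp [mul_assoc]
      rw [h1, intervalIntegral.integral_finset_sum]
      · refine Finset.sum_congr rfl fun k _ => ?_
        rw [intervalIntegral.integral_mul_const]
        rfl
      · intro k _
        exact (((deriv_cont Z hZ i).mul (sig_cont Z hZ (w.take k) b)).mul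
          continuous_const).intervalIntegrable a b
    rw [hsplit, hright, hleft]
    rw [show (i :: w).length + 1 = w.length + 1 + 1 from rfl,
      Finset.sum_range_succ' (fun k => sigCoord Z a b (List.take k (i :: w)) *
        sigCoord Z b c (List.drop k (i :: w))) (w.length + 1)]
    simp [sigCoord]
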